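/- For all integers n ≥ 1 and 0 ≤ i ≤ n, the coefficient of q^i in the finite product (1−q)(1−q^2)⋯(1−q^n) equals (−1)^k if i = k(3k+1)/2 or i = k(3k−1)/2 for some integer k ≥ 0, and equals 0 otherwise. -/

import Mathlib

/-!
STATEMENT 4: For all integers `n ≥ 1` and `0 ≤ i ≤ n`, the coefficient of `q^i` in
`(1-q)(1-q^2)⋯(1-q^n)` equals `(-1)^k` if `i = k(3k+1)/2` or `i = k(3k-1)/2` for some
integer `k ≥ 0`, and equals `0` otherwise.  (The conditions `i = k(3k±1)/2` are phrased
without division as `2i = k(3k±1)`.)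
-/

open PowerSeries

set_option linter.unusedVariables false
set_option linter.unusedSectionVars false

section FranklinPentagonal
open Finset

namespace Franklin

/-- largest part -/
def M (S : Finset ℕ) : ℕ := S.sup id
/-- smallest part -/
def sm (S : Finset ℕ) : ℕ := if h : S.Nonempty then S.min' h else 0

lemma le_M {S : Finset ℕ} {x : ℕ} (hx : x ∈ S) : x ≤ M S := Finset.le_sup (f := id) hx

lemma sm_le {S : Finset ℕ} {x : ℕ} (hx : x ∈ S) : sm S ≤ x := by
  rw [sm, dif_pos ⟨x, hx⟩]; exact Finset.min'_le S x hx

lemma sm_mem {S : Finset ℕ} (hne : S.Nonempty) : sm S ∈ S := by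
  rw [sm, dif_pos hne]; exact S.min'_mem hne

lemma M_eq {S : Finset ℕ} {m : ℕ} (hm : m ∈ S) (h : ∀ x ∈ S, x ≤ m) : M S = m :=
  le_antisymm (Finset.sup_le fun x hx => h x hx) (le_M hm)

lemma sm_eq {S : Finset ℕ} {m : ℕ} (hm : m ∈ S) (h : ∀ x ∈ S, m ≤ x) : sm S = m :=
  le_antisymm (sm_le hm) (h _ (sm_mem ⟨m, hm⟩))

lemma M_mem {S : Finset ℕ} (hne : S.Nonempty) : M S ∈ S := by
  obtain ⟨b, hb, hall⟩ := S.exists_max_image id hne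
  rw [M_eq hb hall]; exact hb

lemma one_le_sm {S : Finset ℕ} (hne : S.Nonempty) (h0 : 0 ∉ S) : 1 ≤ sm S := by
  have := sm_mem hne
  rcases Nat.eq_zero_or_pos (sm S) with h | h
  · rw [h] at this; exact absurd this h0
  · exact h

def prP (S : Finset ℕ) (j : ℕ) : Prop := (M S - (j + 1)) ∉ S ∨ M S ≤ j

instance {S : Finset ℕ} : DecidablePred (prP S) := fun _ => by unfold prP; infer_instance

lemma prP_ex (S : Finset ℕ) : ∃ j, prP S j := ⟨M S, Or.inr le_rfl⟩

/-- length of the maximal "staircase" run at the top -/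
def r (S : Finset ℕ) : ℕ := Nat.find (prP_ex S) + 1

lemma one_le_r (S : Finset ℕ) : 1 ≤ r S := Nat.le_add_left 1 _

lemma run {S : Finset ℕ} (hne : S.Nonempty) {t : ℕ} (ht : t < r S) : M S - t ∈ S := by
  rcases Nat.eq_zero_or_pos t with rfl | htpos
  · simpa using M_mem hne
  · obtain ⟨u, rfl⟩ : ∃ u, t = u + 1 := ⟨t - 1, by omega⟩
    have hu : u < Nat.find (prP_ex S) := by unfold r at ht; omega
    have := Nat.find_min (prP_ex S) hu
    unfold prP at this
    push_neg at this
    exact this.1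

lemma one_le_M {S : Finset ℕ} (hne : S.Nonempty) (h0 : 0 ∉ S) : 1 ≤ M S := by
  have := M_mem hne
  rcases Nat.eq_zero_or_pos (M S) with h | h
  · rw [h] at this; exact absurd this h0
  · exact h

lemma r_stop {S : Finset ℕ} (hne : S.Nonempty) (h0 : 0 ∉ S) : M S - r S ∉ S := by
  have hspec := Nat.find_spec (prP_ex S)
  rw [prP] at hspec
  rcases hspec with h | h
  · exact h
  · exfalso
    have hM1 : 1 ≤ M S := one_le_M hne h0
    have hp : prP S (M S - 1) := by
      unfold prP
      left
      have heq : M S - (M S - 1 + 1) = 0 := by omega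
      rw [heq]; exact h0
    have := Nat.find_le (h := prP_ex S) hp
    omega

lemma r_le_M {S : Finset ℕ} (hne : S.Nonempty) (h0 : 0 ∉ S) : r S ≤ M S := by
  have hM1 : 1 ≤ M S := one_le_M hne h0
  have hp : prP S (M S - 1) := by
    unfold prP; left
    have heq : M S - (M S - 1 + 1) = 0 := by omega
    rw [heq]; exact h0
  have := Nat.find_le (h := prP_ex S) hp
  unfold r
  omega

lemma r_eq {S : Finset ℕ} (hne : S.Nonempty) (h0 : 0 ∉ S) {a : ℕ} (ha : 1 ≤ a)
    (hrun : ∀ t < a, M S - t ∈ S) (hstop : M S - a ∉ S) : r S = a := by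
  have haM : a ≤ M S := by
    have hM1 := one_le_M hne h0
    by_contra h
    push_neg at h
    have hmem := hrun (a - 1) (by omega)
    have h2 : M S - (a - 1) = 0 := by omega
    rw [h2] at hmem
    exact h0 hmem
  have h1 : Nat.find (prP_ex S) ≤ a - 1 := by
    apply Nat.find_le
    unfold prP
    left
    have heq : a - 1 + 1 = a := by omega
    rw [heq]; exact hstop
  have h2 : a - 1 ≤ Nat.find (prP_ex S) := by
    by_contra h
    push_neg at h
    have hspec := Nat.find_spec (prP_ex S)
    rw [prP] at hspec
    rcases hspec with hsp | hsp
    · exact hsp (hrun _ (by omega))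
    · omega
  unfold r
  omega

lemma r_ge {S : Finset ℕ} (hne : S.Nonempty) (h0 : 0 ∉ S) {a : ℕ}
    (hrun : ∀ t < a, M S - t ∈ S) : a ≤ r S := by
  by_contra h
  push_neg at h
  exact r_stop hne h0 (hrun (r S) h)

/-- the minimum is at most `M S - (r S - 1)`, i.e. `sm + r ≤ M + 1`. -/
lemma sm_add_r_le {S : Finset ℕ} (hne : S.Nonempty) (h0 : 0 ∉ S) :
    sm S + r S ≤ M S + 1 := by
  have h1 := run hne (t := r S - 1) (by have := one_le_r S; omega)
  have h2 := sm_le h1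
  have h3 := r_le_M hne h0
  omega

def caseA (S : Finset ℕ) : Prop := sm S ≤ r S ∧ M S ≠ 2 * sm S - 1
def caseB (S : Finset ℕ) : Prop := r S < sm S ∧ M S ≠ 2 * r S

instance {S : Finset ℕ} : Decidable (caseA S) := by unfold caseA; infer_instance
instance {S : Finset ℕ} : Decidable (caseB S) := by unfold caseB; infer_instance

def A (S : Finset ℕ) : Finset ℕ :=
  insert (M S + 1) ((S.erase (sm S)).erase (M S - sm S + 1))

def B (S : Finset ℕ) : Finset ℕ :=
  insert (r S) (insert (M S - r S) (S.erase (M S)))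

section Aspec

variable {S : Finset ℕ} (hne : S.Nonempty) (h0 : 0 ∉ S) (hA : caseA S)

include hne h0 hA

lemma A_M_big : 2 * sm S ≤ M S := by
  have h1 := sm_add_r_le hne h0
  have h2 := hA.1
  have h3 := hA.2
  have h4 := one_le_sm hne h0
  omega

/-- the second element removed is in S -/
lemma A_mem2 : M S - sm S + 1 ∈ S := by
  have h1 := A_M_big hne h0 hA
  have h4 := one_le_sm hne h0
  have h2 := hA.1
  have h5 : M S - sm S + 1 = M S - (sm S - 1) := by omega
  rw [h5]
  exact run hne (by omega)

lemma A_sm_lt_M : sm S < M S := by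
  have := A_M_big hne h0 hA
  have := one_le_sm hne h0
  omega

lemma A_card : (A S).card + 1 = S.card := by
  have h1 := A_M_big hne h0 hA
  have h4 := one_le_sm hne h0
  have hmem2 : M S - sm S + 1 ∈ S.erase (sm S) :=
    Finset.mem_erase.2 ⟨by omega, A_mem2 hne h0 hA⟩
  have hout : M S + 1 ∉ (S.erase (sm S)).erase (M S - sm S + 1) := by
    intro h
    have := le_M (Finset.mem_of_mem_erase (Finset.mem_of_mem_erase h))
    omega
  rw [A, Finset.card_insert_of_notMem hout, Finset.card_erase_of_mem hmem2,
    Finset.card_erase_of_mem (sm_mem hne)]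
  have h2 : 2 ≤ S.card := by
    have := Finset.one_lt_card.2 ⟨_, A_mem2 hne h0 hA, sm S, sm_mem hne, by omega⟩
    omega
  omega

lemma A_sum : (A S).sum id = S.sum id := by
  have h1 := A_M_big hne h0 hA
  have h4 := one_le_sm hne h0
  have hmem2 : M S - sm S + 1 ∈ S.erase (sm S) :=
    Finset.mem_erase.2 ⟨by omega, A_mem2 hne h0 hA⟩
  have hout : M S + 1 ∉ (S.erase (sm S)).erase (M S - sm S + 1) := by
    intro h
    have := le_M (Finset.mem_of_mem_erase (Finset.mem_of_mem_erase h))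
    omega
  have e1 : ((S.erase (sm S)).erase (M S - sm S + 1)).sum id + (M S - sm S + 1)
      = (S.erase (sm S)).sum id := Finset.sum_erase_add _ _ hmem2
  have e2 : (S.erase (sm S)).sum id + sm S = S.sum id := Finset.sum_erase_add _ _ (sm_mem hne)
  rw [A, Finset.sum_insert hout]
  simp only [id] at *
  omega

lemma A_nonempty : (A S).Nonempty := ⟨M S + 1, Finset.mem_insert_self _ _⟩

lemma A_zero : 0 ∉ A S := by
  rw [A]
  intro h
  rcases Finset.mem_insert.1 h with h | h
  · omega
  · exact h0 (Finset.mem_of_mem_erase (Finset.mem_of_mem_erase h))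

lemma A_Mval : M (A S) = M S + 1 := by
  apply M_eq (Finset.mem_insert_self _ _)
  intro x hx
  rcases Finset.mem_insert.1 hx with rfl | hx
  · exact le_rfl
  · have := le_M (Finset.mem_of_mem_erase (Finset.mem_of_mem_erase hx))
    omega

lemma A_elem_gt {x : ℕ} (hx : x ∈ A S) : sm S < x := by
  have h1 := A_M_big hne h0 hA
  have h4 := one_le_sm hne h0
  rcases Finset.mem_insert.1 hx with rfl | hx
  · have := A_sm_lt_M hne h0 hA; omega
  · have hx' := Finset.mem_erase.1 (Finset.mem_of_mem_erase hx)
    have := sm_le hx'.2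
    omega

lemma A_rval : r (A S) = sm S := by
  have h1 := A_M_big hne h0 hA
  have h4 := one_le_sm hne h0
  apply r_eq (A_nonempty hne h0 hA) (A_zero hne h0 hA) h4
  · intro t ht
    rw [A_Mval hne h0 hA]
    rcases Nat.eq_zero_or_pos t with rfl | htpos
    · exact Finset.mem_insert_self _ _
    · have hy : M S - (t - 1) ∈ S := run hne (by have := hA.1; omega)
      have hy2 := sm_le hy
      have heq : M S + 1 - t = M S - (t - 1) := by omega
      rw [heq, A]
      apply Finset.mem_insert_of_mem
      apply Finset.mem_erase.2
      refine ⟨by omega, Finset.mem_erase.2 ⟨by omega, hy⟩⟩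
  · rw [A_Mval hne h0 hA]
    intro h
    rcases Finset.mem_insert.1 h with h | h
    · omega
    · have h2 := Finset.mem_erase.1 h
      have : M S + 1 - sm S = M S - sm S + 1 := by omega
      omega

lemma A_caseB : caseB (A S) := by
  constructor
  · rw [A_rval hne h0 hA]
    have := A_elem_gt hne h0 hA (sm_mem (A_nonempty hne h0 hA))
    exact this
  · rw [A_Mval hne h0 hA, A_rval hne h0 hA]
    have := A_M_big hne h0 hA
    omega

lemma A_not_caseA : ¬ caseA (A S) := by
  intro h
  have h1 := h.1
  rw [A_rval hne h0 hA] at h1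
  have := A_elem_gt hne h0 hA (sm_mem (A_nonempty hne h0 hA))
  omega

lemma B_A : B (A S) = S := by
  have h1 := A_M_big hne h0 hA
  have h4 := one_le_sm hne h0
  have hout : M S + 1 ∉ (S.erase (sm S)).erase (M S - sm S + 1) := by
    intro h
    have := le_M (Finset.mem_of_mem_erase (Finset.mem_of_mem_erase h))
    omega
  rw [B, A_rval hne h0 hA, A_Mval hne h0 hA]
  have e1 : (A S).erase (M S + 1) = (S.erase (sm S)).erase (M S - sm S + 1) := by
    rw [A, Finset.erase_insert hout]
  rw [e1]
  have e2 : M S + 1 - sm S = M S - sm S + 1 := by omega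
  rw [e2]
  rw [Finset.insert_erase (Finset.mem_erase.2 ⟨by omega, A_mem2 hne h0 hA⟩)]
  rw [Finset.insert_erase (sm_mem hne)]

end Aspec

section Bspec

variable {S : Finset ℕ} (hne : S.Nonempty) (h0 : 0 ∉ S) (hB : caseB S)

include hne h0 hB

lemma B_M_big : 2 * r S + 1 ≤ M S := by
  have h1 := sm_add_r_le hne h0
  have h2 := hB.1
  have h3 := hB.2
  omega

lemma B_r_notmem : r S ∉ insert (M S - r S) (S.erase (M S)) := by
  have h1 := B_M_big hne h0 hB
  have h2 := hB.1
  intro h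
  rcases Finset.mem_insert.1 h with h | h
  · omega
  · have := sm_le (Finset.mem_of_mem_erase h)
    omega

lemma B_mr_notmem : M S - r S ∉ S.erase (M S) := fun h =>
  r_stop hne h0 (Finset.mem_of_mem_erase h)

lemma B_card : (B S).card = S.card + 1 := by
  rw [B, Finset.card_insert_of_notMem (B_r_notmem hne h0 hB),
    Finset.card_insert_of_notMem (B_mr_notmem hne h0 hB),
    Finset.card_erase_of_mem (M_mem hne)]
  have : 1 ≤ S.card := Finset.card_pos.2 hne
  omega

lemma B_sum : (B S).sum id = S.sum id := by
  have h1 := B_M_big hne h0 hB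
  have e2 : (S.erase (M S)).sum id + M S = S.sum id := Finset.sum_erase_add _ _ (M_mem hne)
  rw [B, Finset.sum_insert (B_r_notmem hne h0 hB),
    Finset.sum_insert (B_mr_notmem hne h0 hB)]
  simp only [id] at *
  omega

lemma B_nonempty : (B S).Nonempty := ⟨r S, Finset.mem_insert_self _ _⟩

lemma B_zero : 0 ∉ B S := by
  have h1 := B_M_big hne h0 hB
  have h2 := one_le_r S
  intro h
  rcases Finset.mem_insert.1 h with h | h
  · omega
  · rcases Finset.mem_insert.1 h with h | h
    · omega
    · exact h0 (Finset.mem_of_mem_erase h)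

lemma B_Mval : M (B S) = M S - 1 := by
  have h1 := B_M_big hne h0 hB
  have h2 := hB.1
  apply M_eq
  · -- M S - 1 ∈ B S
    rcases Nat.lt_or_ge 1 (r S) with hr | hr
    · -- r ≥ 2 : M - 1 ∈ S
      have hmem : M S - 1 ∈ S := run hne hr
      rw [B]
      exact Finset.mem_insert_of_mem (Finset.mem_insert_of_mem
        (Finset.mem_erase.2 ⟨by omega, hmem⟩))
    · -- r = 1 : M - r = M - 1
      have hr1 : r S = 1 := by have := one_le_r S; omega
      rw [B]
      apply Finset.mem_insert_of_mem
      rw [show M S - r S = M S - 1 by omega]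
      exact Finset.mem_insert_self _ _
  · intro x hx
    rcases Finset.mem_insert.1 hx with rfl | hx
    · omega
    · rcases Finset.mem_insert.1 hx with rfl | hx
      · have h4 := one_le_r S
        omega
      · have h3 := Finset.mem_erase.1 hx
        have := le_M h3.2
        have := h3.1
        omega

lemma B_smval : sm (B S) = r S := by
  have h1 := B_M_big hne h0 hB
  have h2 := hB.1
  apply sm_eq (Finset.mem_insert_self _ _)
  intro x hx
  rcases Finset.mem_insert.1 hx with rfl | hx
  · exact le_rfl
  · rcases Finset.mem_insert.1 hx with rfl | hx
    · omega
    · have := sm_le (Finset.mem_of_mem_erase hx)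
      omega

lemma B_rge : r S ≤ r (B S) := by
  have h1 := B_M_big hne h0 hB
  have h2 := hB.1
  apply r_ge (B_nonempty hne h0 hB) (B_zero hne h0 hB)
  intro t ht
  rw [B_Mval hne h0 hB]
  rcases Nat.lt_or_ge (t + 1) (r S) with h | h
  · -- M - 1 - t = M - (t+1) ∈ S
    have hmem : M S - (t + 1) ∈ S := run hne h
    rw [show M S - 1 - t = M S - (t+1) by omega, B]
    exact Finset.mem_insert_of_mem (Finset.mem_insert_of_mem
      (Finset.mem_erase.2 ⟨by omega, hmem⟩))
  · -- t + 1 = r S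
    have ht1 : t + 1 = r S := by omega
    rw [show M S - 1 - t = M S - r S by omega, B]
    exact Finset.mem_insert_of_mem (Finset.mem_insert_self _ _)

lemma B_caseA : caseA (B S) := by
  constructor
  · rw [B_smval hne h0 hB]; exact B_rge hne h0 hB
  · rw [B_Mval hne h0 hB, B_smval hne h0 hB]
    have := B_M_big hne h0 hB
    have := one_le_r S
    omega

lemma B_not_caseB : ¬ caseB (B S) := by
  intro h
  have h1 := h.1
  rw [B_smval hne h0 hB] at h1
  have := B_rge hne h0 hB
  omega

lemma A_B : A (B S) = S := by
  have h1 := B_M_big hne h0 hB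
  have h2 := hB.1
  rw [A, B_Mval hne h0 hB, B_smval hne h0 hB]
  have e0 : M S - 1 + 1 = M S := by omega
  have e1 : M S - 1 - r S + 1 = M S - r S := by omega
  rw [e0, e1]
  have e2 : (B S).erase (r S) = insert (M S - r S) (S.erase (M S)) := by
    rw [B, Finset.erase_insert (B_r_notmem hne h0 hB)]
  rw [e2, Finset.erase_insert (B_mr_notmem hne h0 hB),
    Finset.insert_erase (M_mem hne)]

end Bspec

/-! ### Gauss sums on intervals -/

lemma twice_sum_Icc (a b : ℕ) (ha : 1 ≤ a) (h : a ≤ b + 1) :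
    2 * (Icc a b).sum id + a * (a - 1) = (b + 1) * b := by
  have h1 : (Finset.range a).sum id + (Finset.Ico a (b+1)).sum id
      = (Finset.range (b+1)).sum id := by
    rw [Finset.range_eq_Ico, Finset.range_eq_Ico]
    exact Finset.sum_Ico_consecutive id (Nat.zero_le a) h
  have h2 : (Finset.range a).sum id * 2 = a * (a - 1) := Finset.sum_range_id_mul_two a
  have h3 : (Finset.range (b+1)).sum id * 2 = (b+1) * (b+1-1) := Finset.sum_range_id_mul_two (b+1)
  have h4 : Finset.Ico a (b+1) = Icc a b := Finset.Ico_add_one_right_eq_Icc ..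
  rw [h4] at h1
  rw [Nat.add_sub_cancel] at h3
  zify [ha] at h1 h2 h3 ⊢
  linear_combination 2 * h1 - h2 + h3

lemma Icc_sum1 {k : ℕ} (hk : 1 ≤ k) : 2 * (Icc k (2*k-1)).sum id = k * (3*k-1) := by
  have h := twice_sum_Icc k (2*k-1) hk (by omega)
  zify [hk, show 1 ≤ 3*k by omega, show 1 ≤ 2*k by omega] at *
  linear_combination h

lemma Icc_sum2 {k : ℕ} (hk : 1 ≤ k) : 2 * (Icc (k+1) (2*k)).sum id = k * (3*k+1) := by
  have h := twice_sum_Icc (k+1) (2*k) (by omega) (by omega)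
  simp only [Nat.add_sub_cancel] at h
  zify at *
  linear_combination h

lemma Icc_card1 {k : ℕ} (hk : 1 ≤ k) : (Icc k (2*k-1)).card = k := by
  rw [Nat.card_Icc]; omega

lemma Icc_card2 (k : ℕ) : (Icc (k+1) (2*k)).card = k := by
  rw [Nat.card_Icc]; omega

/-! ### fixed points -/

lemma fixed_classify {S : Finset ℕ} (hne : S.Nonempty) (h0 : 0 ∉ S)
    (hnA : ¬ caseA S) (hnB : ¬ caseB S) :
    (∃ k, 1 ≤ k ∧ S = Icc k (2*k-1)) ∨ (∃ k, 1 ≤ k ∧ S = Icc (k+1) (2*k)) := by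
  have hsm1 := one_le_sm hne h0
  have hr1 := one_le_r S
  have hsr := sm_add_r_le hne h0
  have hrM := r_le_M hne h0
  rcases le_or_gt (sm S) (r S) with h | h
  · -- first exceptional type : M = 2 sm - 1
    have hM : M S = 2 * sm S - 1 := by
      by_contra hM
      exact hnA ⟨h, hM⟩
    left
    refine ⟨sm S, hsm1, ?_⟩
    ext x
    simp only [Finset.mem_Icc]
    constructor
    · intro hx
      have := sm_le hx
      have := le_M hx
      omega
    · rintro ⟨hx1, hx2⟩
      have hxM : x ≤ M S := by omega
      have heq : x = M S - (M S - x) := by omega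
      rw [heq]
      exact run hne (by omega)
  · -- second type : M = 2 r
    have hM : M S = 2 * r S := by
      by_contra hM
      exact hnB ⟨h, hM⟩
    right
    refine ⟨r S, hr1, ?_⟩
    ext x
    simp only [Finset.mem_Icc]
    constructor
    · intro hx
      have := sm_le hx
      have := le_M hx
      omega
    · rintro ⟨hx1, hx2⟩
      have heq : x = M S - (M S - x) := by omega
      rw [heq]
      exact run hne (by omega)

lemma fixed1_of {k : ℕ} (hk : 1 ≤ k) :
    ¬ caseA (Icc k (2*k-1)) ∧ ¬ caseB (Icc k (2*k-1)) := by
  have hne : (Icc k (2*k-1)).Nonempty := ⟨k, by simp only [Finset.mem_Icc]; omega⟩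
  have h0 : 0 ∉ Icc k (2*k-1) := by simp only [Finset.mem_Icc]; omega
  have hsm : sm (Icc k (2*k-1)) = k := by
    apply sm_eq (by simp only [Finset.mem_Icc]; omega)
    intro x hx; exact (Finset.mem_Icc.1 hx).1
  have hM : M (Icc k (2*k-1)) = 2*k-1 := by
    apply M_eq (by simp only [Finset.mem_Icc]; omega)
    intro x hx; exact (Finset.mem_Icc.1 hx).2
  have hr : r (Icc k (2*k-1)) = k := by
    apply r_eq hne h0 hk
    · intro t ht
      rw [hM]
      simp only [Finset.mem_Icc]
      omega
    · rw [hM]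
      simp only [Finset.mem_Icc]
      omega
  constructor
  · intro hA
    have := hA.2
    rw [hM, hsm] at this
    exact this rfl
  · intro hB
    have := hB.1
    rw [hr, hsm] at this
    omega

lemma fixed2_of {k : ℕ} (hk : 1 ≤ k) :
    ¬ caseA (Icc (k+1) (2*k)) ∧ ¬ caseB (Icc (k+1) (2*k)) := by
  have hne : (Icc (k+1) (2*k)).Nonempty := ⟨k+1, by simp only [Finset.mem_Icc]; omega⟩
  have h0 : 0 ∉ Icc (k+1) (2*k) := by simp only [Finset.mem_Icc]; omega
  have hsm : sm (Icc (k+1) (2*k)) = k+1 := by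
    apply sm_eq (by simp only [Finset.mem_Icc]; omega)
    intro x hx; exact (Finset.mem_Icc.1 hx).1
  have hM : M (Icc (k+1) (2*k)) = 2*k := by
    apply M_eq (by simp only [Finset.mem_Icc]; omega)
    intro x hx; exact (Finset.mem_Icc.1 hx).2
  have hr : r (Icc (k+1) (2*k)) = k := by
    apply r_eq hne h0 hk
    · intro t ht
      rw [hM]
      simp only [Finset.mem_Icc]
      omega
    · rw [hM]
      simp only [Finset.mem_Icc]
      omega
  constructor
  · intro hA
    have := hA.1
    rw [hr, hsm] at this
    omega
  · intro hB
    have := hB.2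
    rw [hM, hr] at this
    exact this rfl

/-! ### the involution and counting -/

def P (n i : ℕ) : Finset (Finset ℕ) :=
  (Finset.Icc 1 n).powerset.filter fun S => S.sum id = i

lemma mem_P {n i : ℕ} {S : Finset ℕ} : S ∈ P n i ↔ S ⊆ Finset.Icc 1 n ∧ S.sum id = i := by
  simp [P]

def g (S : Finset ℕ) : Finset ℕ := if caseA S then A S else if caseB S then B S else S

lemma elem_le_sum {S : Finset ℕ} {x : ℕ} (hx : x ∈ S) : x ≤ S.sum id :=
  Finset.single_le_sum (f := id) (fun _ _ => Nat.zero_le _) hx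

lemma A_le_sum {S : Finset ℕ} (hne : S.Nonempty) (h0 : 0 ∉ S) (hA : caseA S) :
    M S + 1 ≤ S.sum id := by
  have h1 := A_M_big hne h0 hA
  have h4 := one_le_sm hne h0
  have e2 : (S.erase (sm S)).sum id + sm S = S.sum id := Finset.sum_erase_add _ _ (sm_mem hne)
  have hmem2 : M S - sm S + 1 ∈ S.erase (sm S) :=
    Finset.mem_erase.2 ⟨by omega, A_mem2 hne h0 hA⟩
  have h5 : M S - sm S + 1 ≤ (S.erase (sm S)).sum id := elem_le_sum hmem2
  omega

lemma P_basic {n i : ℕ} {S : Finset ℕ} (hS : S ∈ P n i) (hi1 : 1 ≤ i) :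
    S.Nonempty ∧ 0 ∉ S ∧ S.sum id = i := by
  obtain ⟨hsub, hsum⟩ := mem_P.1 hS
  refine ⟨?_, ?_, hsum⟩
  · rcases Finset.eq_empty_or_nonempty S with rfl | h
    · rw [Finset.sum_empty] at hsum; omega
    · exact h
  · intro h
    have := hsub h
    rw [Finset.mem_Icc] at this
    omega

lemma g_mem {n i : ℕ} (hin : i ≤ n) {S : Finset ℕ} (hS : S ∈ P n i) (hi1 : 1 ≤ i)
    (hnf : caseA S ∨ caseB S) : g S ∈ P n i := by
  obtain ⟨hne, h0, hsum⟩ := P_basic hS hi1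
  obtain ⟨hsub, _⟩ := mem_P.1 hS
  by_cases hA : caseA S
  · rw [g, if_pos hA]
    refine mem_P.2 ⟨?_, by rw [A_sum hne h0 hA, hsum]⟩
    intro x hx
    rw [Finset.mem_Icc]
    constructor
    · have := A_zero hne h0 hA
      rcases Nat.eq_zero_or_pos x with rfl | h
      · exact absurd hx this
      · exact h
    · have h1 := le_M hx
      rw [A_Mval hne h0 hA] at h1
      have h2 := A_le_sum hne h0 hA
      omega
  · have hB : caseB S := hnf.resolve_left hA
    rw [g, if_neg hA, if_pos hB]
    refine mem_P.2 ⟨?_, by rw [B_sum hne h0 hB, hsum]⟩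
    intro x hx
    rw [Finset.mem_Icc]
    constructor
    · have := B_zero hne h0 hB
      rcases Nat.eq_zero_or_pos x with rfl | h
      · exact absurd hx this
      · exact h
    · have h1 := le_M hx
      rw [B_Mval hne h0 hB] at h1
      have h2 : M S ≤ S.sum id := elem_le_sum (M_mem hne)
      omega

lemma g_nonfixed {n i : ℕ} {S : Finset ℕ} (hS : S ∈ P n i) (hi1 : 1 ≤ i)
    (hnf : caseA S ∨ caseB S) : caseA (g S) ∨ caseB (g S) := by
  obtain ⟨hne, h0, hsum⟩ := P_basic hS hi1
  by_cases hA : caseA S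
  · rw [g, if_pos hA]
    exact Or.inr (A_caseB hne h0 hA)
  · have hB : caseB S := hnf.resolve_left hA
    rw [g, if_neg hA, if_pos hB]
    exact Or.inl (B_caseA hne h0 hB)

lemma g_g {n i : ℕ} {S : Finset ℕ} (hS : S ∈ P n i) (hi1 : 1 ≤ i)
    (hnf : caseA S ∨ caseB S) : g (g S) = S := by
  obtain ⟨hne, h0, hsum⟩ := P_basic hS hi1
  by_cases hA : caseA S
  · have h1 : g S = A S := by rw [g, if_pos hA]
    rw [h1, g, if_neg (A_not_caseA hne h0 hA), if_pos (A_caseB hne h0 hA)]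
    exact B_A hne h0 hA
  · have hB : caseB S := hnf.resolve_left hA
    have h1 : g S = B S := by rw [g, if_neg hA, if_pos hB]
    rw [h1, g, if_pos (B_caseA hne h0 hB)]
    exact A_B hne h0 hB

lemma g_card {n i : ℕ} {S : Finset ℕ} (hS : S ∈ P n i) (hi1 : 1 ≤ i)
    (hnf : caseA S ∨ caseB S) :
    (g S).card + 1 = S.card ∨ (g S).card = S.card + 1 := by
  obtain ⟨hne, h0, hsum⟩ := P_basic hS hi1
  by_cases hA : caseA S
  · rw [g, if_pos hA]
    exact Or.inl (A_card hne h0 hA)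
  · have hB : caseB S := hnf.resolve_left hA
    rw [g, if_neg hA, if_pos hB]
    exact Or.inr (B_card hne h0 hB)

lemma sum_nonfixed (n i : ℕ) (hin : i ≤ n) (hi1 : 1 ≤ i) :
    ∑ S ∈ (P n i).filter (fun S => caseA S ∨ caseB S), (-1:ℤ)^S.card = 0 := by
  apply Finset.sum_involution (g := fun S _ => g S)
  · intro S hS
    obtain ⟨hSP, hSnf⟩ := Finset.mem_filter.1 hS
    rcases g_card hSP hi1 hSnf with h | h
    · rw [← h, pow_succ]; ring
    · rw [h, pow_succ]; ring
  · intro S hS _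
    obtain ⟨hSP, hSnf⟩ := Finset.mem_filter.1 hS
    intro heq
    rcases g_card hSP hi1 hSnf with h | h <;> rw [heq] at h <;> omega
  · intro S hS
    obtain ⟨hSP, hSnf⟩ := Finset.mem_filter.1 hS
    exact Finset.mem_filter.2 ⟨g_mem hin hSP hi1 hSnf, g_nonfixed hSP hi1 hSnf⟩
  · intro S hS
    obtain ⟨hSP, hSnf⟩ := Finset.mem_filter.1 hS
    exact g_g hSP hi1 hSnf

/-! ### uniqueness of pentagonal representations -/

lemma uplus {k m : ℕ} (h : k*(3*k+1) = m*(3*m+1)) : k = m := by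
  rcases lt_trichotomy k m with hlt | heq | hgt
  · exfalso; nlinarith
  · exact heq
  · exfalso; nlinarith

lemma uminus {k m : ℕ} (hk : 1 ≤ k) (hm : 1 ≤ m) (h : k*(3*k-1) = m*(3*m-1)) : k = m := by
  zify [show 1 ≤ 3*k by omega, show 1 ≤ 3*m by omega] at h
  rcases lt_trichotomy k m with hlt | heq | hgt
  · exfalso
    have hlt' : (k:ℤ) + 1 ≤ (m:ℤ) := by exact_mod_cast hlt
    have hk' : (1:ℤ) ≤ k := by exact_mod_cast hk
    nlinarith
  · exact heq
  · exfalso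
    have hgt' : (m:ℤ) + 1 ≤ (k:ℤ) := by exact_mod_cast hgt
    have hm' : (1:ℤ) ≤ m := by exact_mod_cast hm
    nlinarith

lemma ucross {k m : ℕ} (hk : 1 ≤ k) (hm : 1 ≤ m) : k*(3*k+1) ≠ m*(3*m-1) := by
  intro h
  zify [show 1 ≤ 3*m by omega] at h
  have hk' : (1:ℤ) ≤ k := by exact_mod_cast hk
  have hm' : (1:ℤ) ≤ m := by exact_mod_cast hm
  rcases lt_trichotomy k m with hlt | heq | hgt
  · have hlt' : (k:ℤ) + 1 ≤ (m:ℤ) := by exact_mod_cast hlt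
    nlinarith
  · subst heq
    nlinarith
  · have hgt' : (m:ℤ) + 1 ≤ (k:ℤ) := by exact_mod_cast hgt
    nlinarith

/-! ### evaluating the fixed-point sum -/

lemma fixed_sum_plus {n i k : ℕ} (hin : i ≤ n) (hi1 : 1 ≤ i) (hk : 2*i = k*(3*k+1)) :
    ∑ S ∈ (P n i).filter (fun S => ¬(caseA S ∨ caseB S)), (-1:ℤ)^S.card = (-1)^k := by
  have hk1 : 1 ≤ k := by
    rcases Nat.eq_zero_or_pos k with rfl | h
    · simp at hk; omega
    · exact h
  have hfil : (P n i).filter (fun S => ¬(caseA S ∨ caseB S)) = {Icc (k+1) (2*k)} := by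
    apply Finset.eq_singleton_iff_unique_mem.2
    constructor
    · refine Finset.mem_filter.2 ⟨mem_P.2 ⟨?_, ?_⟩, ?_⟩
      · intro x hx
        rw [Finset.mem_Icc] at hx ⊢
        have h4 : 4*k ≤ k*(3*k+1) := by nlinarith
        omega
      · have := Icc_sum2 hk1
        omega
      · have := fixed2_of hk1
        tauto
    · intro S hS
      obtain ⟨hSP, hSf⟩ := Finset.mem_filter.1 hS
      push_neg at hSf
      obtain ⟨hne, h0, hsum⟩ := P_basic hSP hi1
      rcases fixed_classify hne h0 hSf.1 hSf.2 with ⟨m, hm1, rfl⟩ | ⟨m, hm1, rfl⟩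
      · exfalso
        have := Icc_sum1 hm1
        have h2 : 2*i = m*(3*m-1) := by omega
        exact ucross hk1 hm1 (by omega)
      · have := Icc_sum2 hm1
        have h2 : 2*i = m*(3*m+1) := by omega
        have : m = k := uplus (by omega)
        rw [this]
  rw [hfil, Finset.sum_singleton, Icc_card2]

lemma fixed_sum_minus {n i k : ℕ} (hin : i ≤ n) (hi1 : 1 ≤ i) (hk : 2*i = k*(3*k-1)) :
    ∑ S ∈ (P n i).filter (fun S => ¬(caseA S ∨ caseB S)), (-1:ℤ)^S.card = (-1)^k := by
  have hk1 : 1 ≤ k := by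
    rcases Nat.eq_zero_or_pos k with rfl | h
    · simp at hk; omega
    · exact h
  have hfil : (P n i).filter (fun S => ¬(caseA S ∨ caseB S)) = {Icc k (2*k-1)} := by
    apply Finset.eq_singleton_iff_unique_mem.2
    constructor
    · refine Finset.mem_filter.2 ⟨mem_P.2 ⟨?_, ?_⟩, ?_⟩
      · intro x hx
        rw [Finset.mem_Icc] at hx ⊢
        have h4 : 4*k ≤ k*(3*k-1) + 2 := by
          zify [show 1 ≤ 3*k by omega]
          have hk' : (1:ℤ) ≤ k := by exact_mod_cast hk1
          nlinarith
        omega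
      · have := Icc_sum1 hk1
        omega
      · have := fixed1_of hk1
        tauto
    · intro S hS
      obtain ⟨hSP, hSf⟩ := Finset.mem_filter.1 hS
      push_neg at hSf
      obtain ⟨hne, h0, hsum⟩ := P_basic hSP hi1
      rcases fixed_classify hne h0 hSf.1 hSf.2 with ⟨m, hm1, rfl⟩ | ⟨m, hm1, rfl⟩
      · have := Icc_sum1 hm1
        have h2 : 2*i = m*(3*m-1) := by omega
        have : m = k := uminus hm1 hk1 (by omega)
        rw [this]
      · exfalso
        have := Icc_sum2 hm1
        have h2 : 2*i = m*(3*m+1) := by omega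
        exact ucross hm1 hk1 (by omega)
  rw [hfil, Finset.sum_singleton, Icc_card1 hk1]

lemma fixed_sum_none {n i : ℕ} (hin : i ≤ n) (hi1 : 1 ≤ i)
    (h : ∀ k : ℕ, 2*i ≠ k*(3*k+1) ∧ 2*i ≠ k*(3*k-1)) :
    ∑ S ∈ (P n i).filter (fun S => ¬(caseA S ∨ caseB S)), (-1:ℤ)^S.card = 0 := by
  have hfil : (P n i).filter (fun S => ¬(caseA S ∨ caseB S)) = ∅ := by
    apply Finset.eq_empty_iff_forall_notMem.2
    intro S hS
    obtain ⟨hSP, hSf⟩ := Finset.mem_filter.1 hS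
    push_neg at hSf
    obtain ⟨hne, h0, hsum⟩ := P_basic hSP hi1
    rcases fixed_classify hne h0 hSf.1 hSf.2 with ⟨m, hm1, rfl⟩ | ⟨m, hm1, rfl⟩
    · have := Icc_sum1 hm1
      exact (h m).2 (by omega)
    · have := Icc_sum2 hm1
      exact (h m).1 (by omega)
  rw [hfil, Finset.sum_empty]

lemma P_sum_split (n i : ℕ) (hin : i ≤ n) (hi1 : 1 ≤ i) :
    ∑ S ∈ P n i, (-1:ℤ)^S.card
      = ∑ S ∈ (P n i).filter (fun S => ¬(caseA S ∨ caseB S)), (-1:ℤ)^S.card := by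
  rw [← Finset.sum_filter_add_sum_filter_not (P n i) (fun S => caseA S ∨ caseB S),
    sum_nonfixed n i hin hi1, zero_add]

/-! ### the coefficient as a signed count -/

lemma P_zero (n : ℕ) : P n 0 = {∅} := by
  apply Finset.eq_singleton_iff_unique_mem.2
  constructor
  · exact mem_P.2 ⟨Finset.empty_subset _, Finset.sum_empty⟩
  · intro S hS
    obtain ⟨hsub, hsum⟩ := mem_P.1 hS
    apply Finset.eq_empty_iff_forall_notMem.2
    intro x hx
    have h1 := hsub hx
    rw [Finset.mem_Icc] at h1
    have h2 : x ≤ S.sum id := elem_le_sum hx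
    omega

lemma coeff_eq (n i : ℕ) :
    (PowerSeries.coeff (R := ℤ) i) (∏ j ∈ Finset.Icc 1 n, (1 - (X : PowerSeries ℤ) ^ j)) =
    ∑ S ∈ P n i, (-1:ℤ)^S.card := by
  have hprod : ∏ j ∈ Finset.Icc 1 n, (1 - (X : PowerSeries ℤ)^j)
      = ∑ t ∈ (Finset.Icc 1 n).powerset, (C (R := ℤ) ((-1)^t.card) * X^(t.sum id)) := by
    have h1 : ∀ j ∈ Finset.Icc 1 n, (1 - (X : PowerSeries ℤ)^j) = (-(X^j)) + 1 := by
      intro j _; ring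
    rw [Finset.prod_congr rfl h1, Finset.prod_add]
    apply Finset.sum_congr rfl
    intro t _
    rw [Finset.prod_const_one, mul_one]
    have h2 : ∀ j ∈ t, -(X : PowerSeries ℤ)^j = C (R := ℤ) (-1) * X^j := by
      intro j _
      rw [map_neg, map_one, neg_one_mul]
    rw [Finset.prod_congr rfl h2, Finset.prod_mul_distrib, Finset.prod_const, ← map_pow,
      Finset.prod_pow_eq_pow_sum]
    rfl
  rw [hprod, map_sum]
  simp only [coeff_C_mul, coeff_X_pow]
  rw [P, Finset.sum_filter]
  apply Finset.sum_congr rfl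
  intro t _
  rcases eq_or_ne (t.sum id) i with h | h
  · rw [if_pos h.symm, if_pos h, mul_one]
  · rw [if_neg (fun hh => h hh.symm), if_neg h, mul_zero]

/-! ### cast lemmas -/

lemma cast_plus (i k : ℕ) : 2*(i:ℤ) = (k:ℤ)*(3*(k:ℤ)+1) ↔ 2*i = k*(3*k+1) := by
  constructor
  · intro h; exact_mod_cast h
  · intro h; exact_mod_cast h

lemma cast_minus (i k : ℕ) : 2*(i:ℤ) = (k:ℤ)*(3*(k:ℤ)-1) ↔ 2*i = k*(3*k-1) := by
  rcases Nat.eq_zero_or_pos k with rfl | hk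
  · simp
  · have h3 : ((3*k-1 : ℕ) : ℤ) = 3*(k:ℤ) - 1 := by
      have : 1 ≤ 3*k := by omega
      omega
    constructor
    · intro h
      rw [← h3] at h
      exact_mod_cast h
    · intro h
      have h' : 2*(i:ℤ) = (k:ℤ) * ((3*k-1 : ℕ) : ℤ) := by exact_mod_cast h
      rw [h3] at h'
      exact h'

end Franklin


open Franklin

theorem statement4 (n i : ℕ) (hn : 1 ≤ n) (hi : i ≤ n) :
    (∀ k : ℕ, (2 * (i : ℤ) = (k : ℤ) * (3 * k + 1) ∨ 2 * (i : ℤ) = (k : ℤ) * (3 * k - 1)) →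
      PowerSeries.coeff (R := ℤ) i (∏ j ∈ Finset.Icc 1 n, (1 - (PowerSeries.X : PowerSeries ℤ) ^ j)) =
        (-1 : ℤ) ^ k) ∧
    ((¬ ∃ k : ℕ, 2 * (i : ℤ) = (k : ℤ) * (3 * k + 1) ∨ 2 * (i : ℤ) = (k : ℤ) * (3 * k - 1)) →
      PowerSeries.coeff (R := ℤ) i (∏ j ∈ Finset.Icc 1 n, (1 - (PowerSeries.X : PowerSeries ℤ) ^ j)) =
        0) := by
  constructor
  · intro k hk
    rw [coeff_eq n i]
    rcases Nat.eq_zero_or_pos i with rfl | hi1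
    · -- i = 0 : the only subset is ∅, and k must be 0
      have hk0 : k = 0 := by
        rcases hk with h | h
        · rw [cast_plus] at h
          rcases Nat.eq_zero_or_pos k with rfl | hkp
          · rfl
          · exfalso
            have : 1 ≤ k*(3*k+1) := Nat.one_le_iff_ne_zero.2 (by positivity)
            omega
        · rw [cast_minus] at h
          rcases Nat.eq_zero_or_pos k with rfl | hkp
          · rfl
          · exfalso
            have h1 : 1 ≤ 3*k-1 := by omega
            have : 1 ≤ k*(3*k-1) := Nat.one_le_iff_ne_zero.2 (by positivity)
            omega
      rw [hk0, P_zero, Finset.sum_singleton, Finset.card_empty]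
    · rw [P_sum_split n i hi hi1]
      rcases hk with h | h
      · exact fixed_sum_plus hi hi1 ((cast_plus i k).1 h)
      · exact fixed_sum_minus hi hi1 ((cast_minus i k).1 h)
  · intro hk
    push_neg at hk
    have hi1 : 1 ≤ i := by
      rcases Nat.eq_zero_or_pos i with rfl | h
      · exfalso
        exact (hk 0).1 (by norm_num)
      · exact h
    rw [coeff_eq n i, P_sum_split n i hi hi1]
    apply fixed_sum_none hi hi1
    intro k
    have := hk k
    constructor
    · intro h; exact this.1 ((cast_plus i k).2 h)
    · intro h; exact this.2 ((cast_minus i k).2 h)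

end FranklinPentagonal
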